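/- arXiv:1407.5329 — 6 statements merged into one kernel-verified Lean document; each statement's English description precedes it below -/
import Mathlib

section
/- For the polynomial map F : ℂ³ → ℂ³ defined by F(x₁,x₂,x₃) = (x₁, x₂, x₁x₂x₃), the asymptotic set S_F equals the union of the two coordinate hyperplanes {α₁ = 0} ∪ {α₂ = 0}. -/
open Filter Topology

/-- The asymptotic set of a map `F : ℂ³ → ℂ³`. -/
def asymptoticSet (F : ℂ × ℂ × ℂ → ℂ × ℂ × ℂ) : Set (ℂ × ℂ × ℂ) :=
  {a | ∃ ξ : ℕ → ℂ × ℂ × ℂ,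
    Tendsto (fun k => ‖ξ k‖) atTop atTop ∧ Tendsto (fun k => F (ξ k)) atTop (𝓝 a)}

lemma linv : Tendsto (fun k : ℕ => ((k : ℂ) + 1)⁻¹) atTop (𝓝 0) := by
  rw [tendsto_zero_iff_norm_tendsto_zero]
  have h : ∀ k : ℕ, ‖((k : ℂ) + 1)⁻¹‖ = 1 / ((k : ℝ) + 1) := by
    intro k
    rw [norm_inv, one_div]
    congr 1
    norm_cast
  simp only [h]
  exact tendsto_one_div_add_atTop_nhds_zero_nat

lemma linvc (c : ℂ) : Tendsto (fun k : ℕ => c * ((k : ℂ) + 1)⁻¹) atTop (𝓝 0) := by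
  simpa using linv.const_mul c

lemma lnorm : Tendsto (fun k : ℕ => ((k : ℝ) + 1)) atTop atTop :=
  tendsto_atTop_add_const_right _ 1 tendsto_natCast_atTop_atTop

lemma norm_third_le (x : ℂ × ℂ × ℂ) : ‖x.2.2‖ ≤ ‖x‖ :=
  le_trans (norm_snd_le x.2) (norm_snd_le x)

lemma knorm (k : ℕ) : ‖((k : ℂ) + 1)‖ = (k : ℝ) + 1 := by
  norm_cast

theorem stmt_3 :
    asymptoticSet (fun x : ℂ × ℂ × ℂ => (x.1, x.2.1, x.1 * x.2.1 * x.2.2)) =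
      {a : ℂ × ℂ × ℂ | a.1 = 0} ∪ {a : ℂ × ℂ × ℂ | a.2.1 = 0} := by
  ext a
  constructor
  · rintro ⟨ξ, hnorm, hF⟩
    by_contra hmem
    simp only [Set.mem_union, Set.mem_setOf_eq, not_or] at hmem
    obtain ⟨h1, h2⟩ := hmem
    have hF' : Tendsto (fun k => ((ξ k).1, (ξ k).2.1, (ξ k).1 * (ξ k).2.1 * (ξ k).2.2))
        atTop (𝓝 a) := hF
    have hu : Tendsto (fun k => (ξ k).1) atTop (𝓝 a.1) := hF'.fst_nhds
    have hv : Tendsto (fun k => (ξ k).2.1) atTop (𝓝 a.2.1) := hF'.snd_nhds.fst_nhds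
    have hp : Tendsto (fun k => (ξ k).1 * (ξ k).2.1 * (ξ k).2.2) atTop (𝓝 a.2.2) :=
      hF'.snd_nhds.snd_nhds
    have huv : Tendsto (fun k => (ξ k).1 * (ξ k).2.1) atTop (𝓝 (a.1 * a.2.1)) := hu.mul hv
    have hne : a.1 * a.2.1 ≠ 0 := mul_ne_zero h1 h2
    have hw : Tendsto (fun k => ((ξ k).1 * (ξ k).2.1 * (ξ k).2.2) / ((ξ k).1 * (ξ k).2.1))
        atTop (𝓝 (a.2.2 / (a.1 * a.2.1))) := hp.div huv hne
    have hev : ∀ᶠ k in atTop, ((ξ k).1 * (ξ k).2.1 * (ξ k).2.2) / ((ξ k).1 * (ξ k).2.1)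
        = (ξ k).2.2 := by
      filter_upwards [huv.eventually_ne hne] with k hk
      exact mul_div_cancel_left₀ _ hk
    have hw' : Tendsto (fun k => (ξ k).2.2) atTop (𝓝 (a.2.2 / (a.1 * a.2.1))) :=
      hw.congr' hev
    have hξ : Tendsto ξ atTop (𝓝 (a.1, a.2.1, a.2.2 / (a.1 * a.2.1))) :=
      hu.prodMk_nhds (hv.prodMk_nhds hw')
    exact not_tendsto_atTop_of_tendsto_nhds hξ.norm hnorm
  · intro ha
    have hknz : ∀ k : ℕ, ((k : ℂ) + 1) ≠ 0 := fun k => Nat.cast_add_one_ne_zero k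
    by_cases h2 : a.2.1 = 0
    · by_cases h1 : a.1 = 0
      · -- ξ k = (1/(k+1), a₃/(k+1), (k+1)²)
        refine ⟨fun k => (((k : ℂ) + 1)⁻¹, a.2.2 * ((k : ℂ) + 1)⁻¹, ((k : ℂ) + 1) ^ 2), ?_, ?_⟩
        · refine tendsto_atTop_mono ?_ lnorm
          intro k
          have h1 : (k : ℝ) + 1 ≤ ((k : ℝ) + 1) ^ 2 := by
            nlinarith [Nat.cast_nonneg (α := ℝ) k]
          have h2 : ((k : ℝ) + 1) ^ 2 = ‖(((k : ℂ) + 1) ^ 2 : ℂ)‖ := by rw [norm_pow, knorm]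
          exact le_trans (h1.trans_eq h2) (norm_third_le ⟨_, _, _⟩)
        · have h3 : ∀ k : ℕ,
              ((k:ℂ)+1)⁻¹ * (a.2.2 * ((k:ℂ)+1)⁻¹) * ((k:ℂ)+1) ^ 2 = a.2.2 := by
            intro k
            have := hknz k
            field_simp
          have key : Tendsto (fun k : ℕ =>
              ((((k:ℂ)+1)⁻¹ : ℂ), (a.2.2 * ((k:ℂ)+1)⁻¹ : ℂ),
                (((k:ℂ)+1)⁻¹ * (a.2.2 * ((k:ℂ)+1)⁻¹) * ((k:ℂ)+1) ^ 2 : ℂ)))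
              atTop (𝓝 ((0 : ℂ), (0 : ℂ), a.2.2)) := by
            refine linv.prodMk_nhds (Tendsto.prodMk_nhds ?_ ?_)
            · exact linvc a.2.2
            · simp only [h3]
              exact tendsto_const_nhds
          have haeq : a = ((0 : ℂ), (0 : ℂ), a.2.2) := by
            rw [show a = (a.1, a.2.1, a.2.2) from rfl, h1, h2]
          rw [haeq]
          exact key
      · -- a.1 ≠ 0 : ξ k = (a₁, a₃/(a₁(k+1)), k+1)
        refine ⟨fun k => (a.1, a.2.2 / a.1 * ((k : ℂ) + 1)⁻¹, (k : ℂ) + 1), ?_, ?_⟩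
        · refine tendsto_atTop_mono ?_ lnorm
          intro k
          exact le_trans (knorm k).symm.le (norm_third_le ⟨_, _, _⟩)
        · have h3 : ∀ k : ℕ,
              a.1 * (a.2.2 / a.1 * ((k:ℂ)+1)⁻¹) * ((k:ℂ)+1) = a.2.2 := by
            intro k
            have := hknz k
            field_simp
          have key : Tendsto (fun k : ℕ =>
              ((a.1 : ℂ), (a.2.2 / a.1 * ((k:ℂ)+1)⁻¹ : ℂ),
                (a.1 * (a.2.2 / a.1 * ((k:ℂ)+1)⁻¹) * ((k:ℂ)+1) : ℂ)))
              atTop (𝓝 (a.1, (0 : ℂ), a.2.2)) := by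
            refine tendsto_const_nhds.prodMk_nhds (Tendsto.prodMk_nhds ?_ ?_)
            · exact linvc _
            · simp only [h3]
              exact tendsto_const_nhds
          have haeq : a = (a.1, (0 : ℂ), a.2.2) := by
            rw [show a = (a.1, a.2.1, a.2.2) from rfl, h2]
          rw [haeq]
          exact key
    · -- a.2.1 ≠ 0, so a.1 = 0 : ξ k = (a₃/(a₂(k+1)), a₂, k+1)
      have h1 : a.1 = 0 := by
        rcases ha with h | h
        · exact h
        · exact absurd h h2
      refine ⟨fun k => (a.2.2 / a.2.1 * ((k : ℂ) + 1)⁻¹, a.2.1, (k : ℂ) + 1), ?_, ?_⟩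
      · refine tendsto_atTop_mono ?_ lnorm
        intro k
        exact le_trans (knorm k).symm.le (norm_third_le ⟨_, _, _⟩)
      · have h3 : ∀ k : ℕ,
            a.2.2 / a.2.1 * ((k:ℂ)+1)⁻¹ * a.2.1 * ((k:ℂ)+1) = a.2.2 := by
          intro k
          have := hknz k
          field_simp
        have key : Tendsto (fun k : ℕ =>
            ((a.2.2 / a.2.1 * ((k:ℂ)+1)⁻¹ : ℂ), (a.2.1 : ℂ),
              (a.2.2 / a.2.1 * ((k:ℂ)+1)⁻¹ * a.2.1 * ((k:ℂ)+1) : ℂ)))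
            atTop (𝓝 ((0 : ℂ), a.2.1, a.2.2)) := by
          refine Tendsto.prodMk_nhds ?_ (Tendsto.prodMk_nhds tendsto_const_nhds ?_)
          · exact linvc _
          · simp only [h3]
            exact tendsto_const_nhds
        have haeq : a = ((0 : ℂ), a.2.1, a.2.2) := by
          rw [show a = (a.1, a.2.1, a.2.2) from rfl, h1]
        rw [haeq]
        exact key
end

section
/- For the polynomial map F : ℂ² → ℂ² defined by F(x₁,x₂) = ((x₁x₂)², (x₁x₂)³ + x₁), if γ : (0,∞) → ℂ² is a curve with ‖γ(u)‖ → ∞ such that F(γ(u)) converges, then γ₁(u) does not tend to infinity while γ₂(u) tends to infinity. -/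
open Filter Topology

theorem stmt_6 (F : ℂ × ℂ → ℂ × ℂ)
    (hF : F = fun x : ℂ × ℂ => ((x.1 * x.2) ^ 2, (x.1 * x.2) ^ 3 + x.1))
    (γ : ℝ → ℂ × ℂ) (a : ℂ × ℂ)
    (hinf : Tendsto (fun u => ‖γ u‖) atTop atTop)
    (hconv : Tendsto (fun u => F (γ u)) atTop (𝓝 a)) :
    ¬ Tendsto (fun u => ‖(γ u).1‖) atTop atTop ∧
      Tendsto (fun u => ‖(γ u).2‖) atTop atTop := by
  subst hF
  set p : ℝ → ℂ := fun u => (γ u).1 * (γ u).2 with hp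
  have h1 : Tendsto (fun u => (p u) ^ 2) atTop (𝓝 a.1) := (continuous_fst.tendsto a).comp hconv
  have h2 : Tendsto (fun u => (p u) ^ 3 + (γ u).1) atTop (𝓝 a.2) :=
    (continuous_snd.tendsto a).comp hconv
  -- ‖p‖ eventually bounded
  set M : ℝ := max 1 (‖a.1‖ + 1) with hM
  have hM1 : (1:ℝ) ≤ M := le_max_left _ _
  have hpb : ∀ᶠ u in atTop, ‖p u‖ ≤ M := by
    have := (h1.norm.eventually (eventually_le_nhds (lt_add_one ‖a.1‖)))
    filter_upwards [this] with u hu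
    by_cases h : ‖p u‖ ≤ 1
    · exact h.trans hM1
    · push_neg at h
      have : ‖p u‖ ≤ ‖p u‖ ^ 2 := by nlinarith
      calc ‖p u‖ ≤ ‖p u‖ ^ 2 := this
        _ = ‖(p u) ^ 2‖ := (norm_pow _ _).symm
        _ ≤ ‖a.1‖ + 1 := hu
        _ ≤ M := le_max_right _ _
  set C : ℝ := (‖a.2‖ + 1) + M ^ 3 with hC
  have hx1b : ∀ᶠ u in atTop, ‖(γ u).1‖ ≤ C := by
    have := (h2.norm.eventually (eventually_le_nhds (lt_add_one ‖a.2‖)))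
    filter_upwards [this, hpb] with u hu hpu
    have h3 : ‖(p u) ^ 3‖ ≤ M ^ 3 := by
      rw [norm_pow]
      exact pow_le_pow_left₀ (norm_nonneg _) hpu 3
    calc ‖(γ u).1‖ = ‖((p u) ^ 3 + (γ u).1) - (p u) ^ 3‖ := by ring_nf
      _ ≤ ‖(p u) ^ 3 + (γ u).1‖ + ‖(p u) ^ 3‖ := norm_sub_le _ _
      _ ≤ (‖a.2‖ + 1) + M ^ 3 := add_le_add hu h3
  constructor
  · intro h
    have h' := h.eventually_gt_atTop C
    obtain ⟨u, hu1, hu2⟩ := (h'.and hx1b).exists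
    linarith
  · have hbig : ∀ᶠ u in atTop, ‖γ u‖ ≤ ‖(γ u).2‖ := by
      filter_upwards [hinf.eventually_gt_atTop C, hx1b] with u hu1 hu2
      have : ‖γ u‖ = max ‖(γ u).1‖ ‖(γ u).2‖ := rfl
      rw [this] at hu1 ⊢
      rcases max_cases ‖(γ u).1‖ ‖(γ u).2‖ with ⟨he, _⟩ | ⟨he, _⟩
      · linarith [he ▸ hu1]
      · exact le_of_eq he
    exact tendsto_atTop_mono' _ hbig hinf
end

section
/- For the polynomial map F : ℂ³ → ℂ³ defined by F(x₁,x₂,x₃) = ((x₁x₂)², (x₂x₃)², x₁x₂²x₃ + x₂) and any α, β ∈ ℂ, the curve γ(u) = (α·u, 1/u, β·u) satisfies F(γ(u)) → (α², β², αβ) as u → ∞; if moreover (α,β) ≠ (0,0), then ‖γ(u)‖ → ∞, so (α², β², αβ) ∈ S_F. -/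
open Filter Topology

theorem stmt_9 (F : ℂ × ℂ × ℂ → ℂ × ℂ × ℂ)
    (hF : F = fun x : ℂ × ℂ × ℂ =>
      ((x.1 * x.2.1) ^ 2, (x.2.1 * x.2.2) ^ 2, x.1 * x.2.1 ^ 2 * x.2.2 + x.2.1))
    (α β : ℂ) :
    Tendsto (fun u : ℝ => F (α * u, (u : ℂ)⁻¹, β * u)) atTop
      (𝓝 (α ^ 2, β ^ 2, α * β)) ∧
    ((α, β) ≠ ((0 : ℂ), (0 : ℂ)) →
      Tendsto (fun u : ℝ => ‖((α * u, (u : ℂ)⁻¹, β * u) : ℂ × ℂ × ℂ)‖) atTop atTop ∧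
      (α ^ 2, β ^ 2, α * β) ∈ asymptoticSet F) := by
  subst hF
  have hzero : Tendsto (fun u : ℝ => ((u : ℂ)⁻¹)) atTop (𝓝 0) := by
    have h1 : Tendsto (fun u : ℝ => u⁻¹) atTop (𝓝 0) := tendsto_inv_atTop_zero
    have h2 := (Complex.continuous_ofReal.tendsto 0).comp h1
    exact h2.congr (fun u => by simp)
  have hmain : Tendsto (fun u : ℝ =>
      ((α * u * (u : ℂ)⁻¹) ^ 2, ((u : ℂ)⁻¹ * (β * u)) ^ 2,
        α * u * ((u : ℂ)⁻¹) ^ 2 * (β * u) + (u : ℂ)⁻¹)) atTop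
      (𝓝 (α ^ 2, β ^ 2, α * β)) := by
    have heq : (fun u : ℝ => ((α : ℂ) ^ 2, (β : ℂ) ^ 2, α * β + (u : ℂ)⁻¹))
        =ᶠ[atTop] (fun u : ℝ => ((α * u * (u : ℂ)⁻¹) ^ 2, ((u : ℂ)⁻¹ * (β * u)) ^ 2,
        α * u * ((u : ℂ)⁻¹) ^ 2 * (β * u) + (u : ℂ)⁻¹)) := by
      filter_upwards [eventually_gt_atTop (0 : ℝ)] with u hu
      have hu' : (u : ℂ) ≠ 0 := by exact_mod_cast hu.ne'
      simp only [Prod.mk.injEq]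
      refine ⟨by field_simp, by field_simp, by field_simp⟩
    refine Tendsto.congr' heq ?_
    have h3 : Tendsto (fun u : ℝ => α * β + (u : ℂ)⁻¹) atTop (𝓝 (α * β)) := by
      simpa using (tendsto_const_nhds.add hzero)
    rw [nhds_prod_eq, nhds_prod_eq]
    exact Tendsto.prodMk (tendsto_const_nhds : Tendsto (fun _ : ℝ => α ^ 2) atTop (𝓝 (α ^ 2)))
      (Tendsto.prodMk (tendsto_const_nhds : Tendsto (fun _ : ℝ => β ^ 2) atTop (𝓝 (β ^ 2))) h3)
  refine ⟨hmain, fun hne => ?_⟩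
  have hnorm : Tendsto (fun u : ℝ => ‖((α * u, (u : ℂ)⁻¹, β * u) : ℂ × ℂ × ℂ)‖)
      atTop atTop := by
    rcases (by
      by_contra h
      push_neg at h
      exact hne (by simp [h.1, h.2]) : α ≠ 0 ∨ β ≠ 0) with hα | hβ
    · have : Tendsto (fun u : ℝ => ‖α‖ * u) atTop atTop :=
        tendsto_id.const_mul_atTop (norm_pos_iff.mpr ‹_›)
      refine tendsto_atTop_mono' _ ?_ this
      filter_upwards [eventually_ge_atTop (0 : ℝ)] with u hu
      calc ‖α‖ * u = ‖α * (u : ℂ)‖ := by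
            rw [norm_mul]; simp [abs_of_nonneg hu]
        _ ≤ ‖((α * u, (u : ℂ)⁻¹, β * u) : ℂ × ℂ × ℂ)‖ := by
            rw [Prod.norm_def]; exact le_max_left _ _
    · have : Tendsto (fun u : ℝ => ‖β‖ * u) atTop atTop :=
        tendsto_id.const_mul_atTop (norm_pos_iff.mpr ‹_›)
      refine tendsto_atTop_mono' _ ?_ this
      filter_upwards [eventually_ge_atTop (0 : ℝ)] with u hu
      calc ‖β‖ * u = ‖β * (u : ℂ)‖ := by
            rw [norm_mul]; simp [abs_of_nonneg hu]
        _ ≤ ‖((α * u, (u : ℂ)⁻¹, β * u) : ℂ × ℂ × ℂ)‖ := by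
            rw [Prod.norm_def, Prod.norm_def]
            exact le_trans (le_max_right _ _) (le_max_right _ _)
  refine ⟨hnorm, ?_⟩
  have hs : Tendsto (fun k : ℕ => ((k : ℝ) + 1)) atTop atTop :=
    tendsto_atTop_add_const_right _ 1 tendsto_natCast_atTop_atTop
  refine ⟨fun k => (α * ((k : ℝ) + 1 : ℝ), ((((k : ℝ) + 1 : ℝ) : ℝ) : ℂ)⁻¹,
      β * ((k : ℝ) + 1 : ℝ)), ?_, ?_⟩
  · exact hnorm.comp hs
  · exact hmain.comp hs
end

section
/- For the polynomial map F : ℂ³ → ℂ³ defined by F(x₁,x₂,x₃) = (x₁x₂, (x₂x₃)², x₁x₂²x₃ + x₂), the asymptotic set S_F equals the Whitney umbrella { (α, β², αβ) : α, β ∈ ℂ }. -/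
open Filter Topology

private lemma inv_nat_complex_tendsto :
    Tendsto (fun k : ℕ => ((k : ℂ))⁻¹) atTop (𝓝 0) := by
  have h : Tendsto (fun k : ℕ => ((k : ℝ))⁻¹) atTop (𝓝 0) :=
    tendsto_inv_atTop_zero.comp tendsto_natCast_atTop_atTop
  have h2 := (Complex.continuous_ofReal.tendsto 0).comp h
  simp only [Function.comp_def] at h2
  push_cast at h2
  exact h2

theorem stmt_10 :
    asymptoticSet (fun x : ℂ × ℂ × ℂ =>
        (x.1 * x.2.1, (x.2.1 * x.2.2) ^ 2, x.1 * x.2.1 ^ 2 * x.2.2 + x.2.1)) =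
      {a : ℂ × ℂ × ℂ | ∃ α β : ℂ, a = (α, β ^ 2, α * β)} := by
  ext ⟨a, b, c⟩
  constructor
  · rintro ⟨ξ, hnorm, hF⟩
    -- component limits
    have hu : Tendsto (fun k => (ξ k).1 * (ξ k).2.1) atTop (𝓝 a) :=
      (continuous_fst.tendsto _).comp hF
    have hv : Tendsto (fun k => ((ξ k).2.1 * (ξ k).2.2) ^ 2) atTop (𝓝 b) :=
      ((continuous_fst.comp continuous_snd).tendsto _).comp hF
    have hw : Tendsto (fun k => (ξ k).1 * (ξ k).2.1 ^ 2 * (ξ k).2.2 + (ξ k).2.1)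
        atTop (𝓝 c) :=
      ((continuous_snd.comp continuous_snd).tendsto _).comp hF
    -- bounds
    obtain ⟨Cu, hCu⟩ : ∃ C, ∀ k, ‖(ξ k).1 * (ξ k).2.1‖ ≤ C := by
      obtain ⟨C, hC⟩ := hu.norm.bddAbove_range
      exact ⟨C, fun k => hC ⟨k, rfl⟩⟩
    obtain ⟨Cv, hCv⟩ : ∃ C, ∀ k, ‖((ξ k).2.1 * (ξ k).2.2) ^ 2‖ ≤ C := by
      obtain ⟨C, hC⟩ := hv.norm.bddAbove_range
      exact ⟨C, fun k => hC ⟨k, rfl⟩⟩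
    obtain ⟨Cw, hCw⟩ : ∃ C, ∀ k, ‖(ξ k).1 * (ξ k).2.1 ^ 2 * (ξ k).2.2 + (ξ k).2.1‖ ≤ C := by
      obtain ⟨C, hC⟩ := hw.norm.bddAbove_range
      exact ⟨C, fun k => hC ⟨k, rfl⟩⟩
    have hCu0 : 0 ≤ Cu := le_trans (norm_nonneg _) (hCu 0)
    have hCv0 : 0 ≤ Cv := le_trans (norm_nonneg _) (hCv 0)
    have hCw0 : 0 ≤ Cw := le_trans (norm_nonneg _) (hCw 0)
    -- x₂x₃ is bounded
    have hP : ∀ k, ‖(ξ k).2.1 * (ξ k).2.2‖ ≤ Cv + 1 := by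
      intro k
      have h1 : ‖(ξ k).2.1 * (ξ k).2.2‖ ^ 2 ≤ Cv := by
        have := hCv k
        rwa [norm_pow] at this
      nlinarith [norm_nonneg ((ξ k).2.1 * (ξ k).2.2), sq_nonneg (‖(ξ k).2.1 * (ξ k).2.2‖ - 1)]
    -- x₂ is bounded
    have hx2bdd : ∀ k, ‖(ξ k).2.1‖ ≤ Cw + Cu * (Cv + 1) := by
      intro k
      have key : (ξ k).2.1 =
          ((ξ k).1 * (ξ k).2.1 ^ 2 * (ξ k).2.2 + (ξ k).2.1)
            - ((ξ k).1 * (ξ k).2.1) * ((ξ k).2.1 * (ξ k).2.2) := by ring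
      calc ‖(ξ k).2.1‖ = ‖((ξ k).1 * (ξ k).2.1 ^ 2 * (ξ k).2.2 + (ξ k).2.1)
            - ((ξ k).1 * (ξ k).2.1) * ((ξ k).2.1 * (ξ k).2.2)‖ := by rw [← key]
        _ ≤ ‖(ξ k).1 * (ξ k).2.1 ^ 2 * (ξ k).2.2 + (ξ k).2.1‖
            + ‖((ξ k).1 * (ξ k).2.1) * ((ξ k).2.1 * (ξ k).2.2)‖ := norm_sub_le _ _
        _ ≤ Cw + Cu * (Cv + 1) := by
            refine add_le_add (hCw k) ?_
            rw [norm_mul]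
            exact mul_le_mul (hCu k) (hP k) (norm_nonneg _) hCu0
    set C₂ := Cw + Cu * (Cv + 1) with hC₂def
    have hC₂0 : 0 ≤ C₂ := le_trans (norm_nonneg _) (hx2bdd 0)
    set M := Cu + (Cv + 1) + C₂ ^ 2 with hMdef
    -- ‖x₂‖ * ‖ξ‖ ≤ M
    have hkey : ∀ k, ‖(ξ k).2.1‖ * ‖ξ k‖ ≤ M := by
      intro k
      have hnormξ : ‖ξ k‖ = max ‖(ξ k).1‖ (max ‖(ξ k).2.1‖ ‖(ξ k).2.2‖) := by
        simp [Prod.norm_def]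
      rw [hnormξ]
      rcases max_cases ‖(ξ k).1‖ (max ‖(ξ k).2.1‖ ‖(ξ k).2.2‖) with ⟨h, _⟩ | ⟨h, _⟩
      · rw [h]
        have : ‖(ξ k).2.1‖ * ‖(ξ k).1‖ = ‖(ξ k).1 * (ξ k).2.1‖ := by
          rw [norm_mul]; ring
        rw [this]
        have := hCu k
        nlinarith [sq_nonneg C₂, hCv0]
      · rw [h]
        rcases max_cases ‖(ξ k).2.1‖ ‖(ξ k).2.2‖ with ⟨h2, _⟩ | ⟨h2, _⟩
        · rw [h2]
          have h3 : ‖(ξ k).2.1‖ * ‖(ξ k).2.1‖ ≤ C₂ ^ 2 := by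
            have := hx2bdd k
            nlinarith [norm_nonneg (ξ k).2.1]
          nlinarith [hCu0, hCv0]
        · rw [h2]
          have : ‖(ξ k).2.1‖ * ‖(ξ k).2.2‖ = ‖(ξ k).2.1 * (ξ k).2.2‖ := (norm_mul _ _).symm
          rw [this]
          have := hP k
          nlinarith [sq_nonneg C₂, hCu0]
    -- x₂ → 0
    have hx2 : Tendsto (fun k => (ξ k).2.1) atTop (𝓝 0) := by
      rw [tendsto_zero_iff_norm_tendsto_zero]
      refine squeeze_zero' (Eventually.of_forall fun k => norm_nonneg _) ?_
        (tendsto_const_nhds.div_atTop hnorm (a := M))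
      filter_upwards [hnorm.eventually_ge_atTop 1] with k hk
      rw [le_div_iff₀ (by linarith)]
      exact hkey k
    -- c ^ 2 = a ^ 2 * b
    have hrel : c ^ 2 - a ^ 2 * b = 0 := by
      have h1 : Tendsto (fun k =>
          ((ξ k).1 * (ξ k).2.1 ^ 2 * (ξ k).2.2 + (ξ k).2.1) ^ 2
            - ((ξ k).1 * (ξ k).2.1) ^ 2 * ((ξ k).2.1 * (ξ k).2.2) ^ 2)
          atTop (𝓝 (c ^ 2 - a ^ 2 * b)) :=
        (hw.pow 2).sub ((hu.pow 2).mul hv)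
      have h2 : Tendsto (fun k =>
          ((ξ k).1 * (ξ k).2.1 ^ 2 * (ξ k).2.2 + (ξ k).2.1) ^ 2
            - ((ξ k).1 * (ξ k).2.1) ^ 2 * ((ξ k).2.1 * (ξ k).2.2) ^ 2)
          atTop (𝓝 0) := by
        have heq : (fun k =>
            ((ξ k).1 * (ξ k).2.1 ^ 2 * (ξ k).2.2 + (ξ k).2.1) ^ 2
              - ((ξ k).1 * (ξ k).2.1) ^ 2 * ((ξ k).2.1 * (ξ k).2.2) ^ 2)
            = fun k => (ξ k).2.1 *
              (2 * ((ξ k).1 * (ξ k).2.1 ^ 2 * (ξ k).2.2 + (ξ k).2.1) - (ξ k).2.1) := by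
          funext k; ring
        rw [heq]
        have := hx2.mul (((hw.const_mul 2)).sub hx2)
        simpa using this
      exact tendsto_nhds_unique h1 h2
    -- produce α β
    by_cases ha : a = 0
    · have hc : c = 0 := by
        have : c ^ 2 = 0 := by rw [ha] at hrel; linear_combination hrel
        exact pow_eq_zero_iff (by norm_num) |>.mp this
      obtain ⟨β, hβ⟩ := IsAlgClosed.exists_pow_nat_eq b (n := 2) (by norm_num)
      exact ⟨0, β, by simp [ha, hc, hβ.symm]⟩
    · refine ⟨a, c / a, ?_⟩
      have hb : b = (c / a) ^ 2 := by
        field_simp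
        linear_combination -hrel
      have hc : c = a * (c / a) := by field_simp
      rw [← hb, ← hc]
  · rintro ⟨α, β, h⟩
    rw [h]
    by_cases hβ : β = 0
    · -- use ξ k = (α k², 1/k², k)
      subst hβ
      refine ⟨fun k => (α * (k : ℂ) ^ 2, ((k : ℂ) ^ 2)⁻¹, (k : ℂ)), ?_, ?_⟩
      · refine tendsto_atTop_mono (fun k => ?_) tendsto_natCast_atTop_atTop
        calc (k : ℝ) = ‖((k : ℂ))‖ := by simp
          _ ≤ ‖((((k : ℂ) ^ 2)⁻¹, (k : ℂ)) : ℂ × ℂ)‖ := norm_snd_le (((k : ℂ) ^ 2)⁻¹, (k : ℂ))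
          _ ≤ _ := norm_snd_le (α * (k : ℂ) ^ 2, (((k : ℂ) ^ 2)⁻¹, (k : ℂ)))
      · have hlim : Tendsto (fun k : ℕ => ((k : ℂ))⁻¹) atTop (𝓝 0) :=
          inv_nat_complex_tendsto
        have hpt : ((α, (0:ℂ) ^ 2, α * (0:ℂ)) : ℂ × ℂ × ℂ) = (α, 0, 0) := by norm_num
        rw [hpt]
        have h2 : Tendsto (fun k : ℕ => ((k : ℂ))⁻¹ * ((k : ℂ))⁻¹) atTop (𝓝 0) := by
          have := hlim.mul hlim; rwa [mul_zero] at this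
        have h3 : Tendsto (fun k : ℕ => α * ((k : ℂ))⁻¹ + ((k : ℂ))⁻¹ * ((k : ℂ))⁻¹)
            atTop (𝓝 0) := by
          have := (hlim.const_mul α).add h2
          rwa [mul_zero, add_zero] at this
        refine Tendsto.congr' ?_
          ((tendsto_const_nhds (x := α)).prodMk_nhds (h2.prodMk_nhds h3))
        filter_upwards [eventually_ge_atTop 1] with k hk
        have hk0 : (k : ℂ) ≠ 0 := Nat.cast_ne_zero.mpr (by omega)
        refine Prod.ext ?_ (Prod.ext ?_ ?_) <;> simp only <;> field_simp <;> ring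
    · -- use ξ k = (α k, 1/k, β k)
      refine ⟨fun k => (α * (k : ℂ), ((k : ℂ))⁻¹, β * (k : ℂ)), ?_, ?_⟩
      · have h1 : Tendsto (fun k : ℕ => ‖β‖ * (k : ℝ)) atTop atTop :=
          Tendsto.const_mul_atTop (norm_pos_iff.mpr hβ) tendsto_natCast_atTop_atTop
        refine tendsto_atTop_mono (fun k => ?_) h1
        calc ‖β‖ * (k : ℝ) = ‖β * (k : ℂ)‖ := by simp
          _ ≤ ‖((((k : ℂ))⁻¹, β * (k : ℂ)) : ℂ × ℂ)‖ := norm_snd_le (((k : ℂ))⁻¹, β * (k : ℂ))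
          _ ≤ _ := norm_snd_le (α * (k : ℂ), (((k : ℂ))⁻¹, β * (k : ℂ)))
      · have hlim : Tendsto (fun k : ℕ => ((k : ℂ))⁻¹) atTop (𝓝 0) :=
          inv_nat_complex_tendsto
        have h3 : Tendsto (fun k : ℕ => α * β + ((k : ℂ))⁻¹) atTop (𝓝 (α * β)) := by
          have := (tendsto_const_nhds (x := α * β)).add hlim
          rwa [add_zero] at this
        refine Tendsto.congr' ?_
          ((tendsto_const_nhds (x := α)).prodMk_nhds
            ((tendsto_const_nhds (x := β ^ 2)).prodMk_nhds h3))
        filter_upwards [eventually_ge_atTop 1] with k hk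
        have hk0 : (k : ℂ) ≠ 0 := Nat.cast_ne_zero.mpr (by omega)
        refine Prod.ext ?_ (Prod.ext ?_ ?_) <;> simp only <;> field_simp <;> ring
end

section
/- For the polynomial map F : ℂ³ → ℂ³ defined by F(x₁,x₂,x₃) = (x₁x₂ + x₃, x₂x₃ + x₃x₁, x₁x₂ + x₂x₃ + x₃x₁), the asymptotic set S_F is contained in the plane { (α₁,α₂,α₃) ∈ ℂ³ : α₃ = α₁ + α₂ }. -/
open Filter Topology

theorem stmt_11 :
    asymptoticSet (fun x : ℂ × ℂ × ℂ =>
        (x.1 * x.2.1 + x.2.2, x.2.1 * x.2.2 + x.2.2 * x.1,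
          x.1 * x.2.1 + x.2.1 * x.2.2 + x.2.2 * x.1)) ⊆
      {a : ℂ × ℂ × ℂ | a.2.2 = a.1 + a.2.1} := by
  rintro a ⟨ξ, hb, h⟩
  have h1 : Tendsto (fun k => (ξ k).1 * (ξ k).2.1 + (ξ k).2.2) atTop (𝓝 a.1) :=
    (continuous_fst.tendsto a).comp h
  have h2 : Tendsto (fun k => (ξ k).2.1 * (ξ k).2.2 + (ξ k).2.2 * (ξ k).1) atTop (𝓝 a.2.1) :=
    ((continuous_fst.comp continuous_snd).tendsto a).comp h
  have h3 : Tendsto (fun k => (ξ k).1 * (ξ k).2.1 + (ξ k).2.1 * (ξ k).2.2 + (ξ k).2.2 * (ξ k).1)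
      atTop (𝓝 a.2.2) :=
    ((continuous_snd.comp continuous_snd).tendsto a).comp h
  -- x₃ tends to c := a₁ + a₂ - a₃
  set c : ℂ := a.1 + a.2.1 - a.2.2 with hc
  have hx3 : Tendsto (fun k => (ξ k).2.2) atTop (𝓝 c) := by
    have := (h1.add h2).sub h3
    convert this using 2 with k
    · ring
  by_contra h0
  have hcne : c ≠ 0 := by
    simp only [Set.mem_setOf_eq] at h0
    intro hc0
    apply h0
    have : a.1 + a.2.1 - a.2.2 = 0 := hc0
    linear_combination -this
  -- eventually x₃ ≠ 0
  have hne : ∀ᶠ k in atTop, (ξ k).2.2 ≠ 0 := hx3.eventually_ne hcne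
  -- s := x₁ + x₂ tends to a₂ / c
  have hsdiv : Tendsto (fun k => ((ξ k).2.1 * (ξ k).2.2 + (ξ k).2.2 * (ξ k).1) / (ξ k).2.2)
      atTop (𝓝 (a.2.1 / c)) := h2.div hx3 hcne
  have hs : Tendsto (fun k => (ξ k).1 + (ξ k).2.1) atTop (𝓝 (a.2.1 / c)) := by
    apply hsdiv.congr'
    filter_upwards [hne] with k hk
    field_simp
    ring
  -- p := x₁x₂ tends to a₁ - c
  have hp : Tendsto (fun k => (ξ k).1 * (ξ k).2.1) atTop (𝓝 (a.1 - c)) := by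
    have := h1.sub hx3
    convert this using 2 with k
    ring
  -- bounds
  obtain ⟨Bs, hBs⟩ : ∃ B : ℝ, ∀ᶠ k in atTop, ‖(ξ k).1 + (ξ k).2.1‖ ≤ B :=
    ⟨‖a.2.1 / c‖ + 1, (hs.norm.eventually_lt_const (by linarith)).mono fun k hk => hk.le⟩
  obtain ⟨Bp, hBp⟩ : ∃ B : ℝ, ∀ᶠ k in atTop, ‖(ξ k).1 * (ξ k).2.1‖ ≤ B :=
    ⟨‖a.1 - c‖ + 1, (hp.norm.eventually_lt_const (by linarith)).mono fun k hk => hk.le⟩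
  obtain ⟨B3, hB3⟩ : ∃ B : ℝ, ∀ᶠ k in atTop, ‖(ξ k).2.2‖ ≤ B :=
    ⟨‖c‖ + 1, (hx3.norm.eventually_lt_const (by linarith)).mono fun k hk => hk.le⟩
  set B : ℝ := max 1 (max Bs (max Bp B3)) with hB
  have hB1 : (1 : ℝ) ≤ B := le_max_left _ _
  have hbig : ∀ᶠ k in atTop, 2 * B + 1 ≤ ‖ξ k‖ := hb.eventually_ge_atTop (2 * B + 1)
  obtain ⟨k, hks, hkp, hk3, hkn⟩ := (hBs.and (hBp.and (hB3.and hbig))).exists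
  set x := (ξ k).1
  set y := (ξ k).2.1
  set z := (ξ k).2.2
  have hxs : ‖x + y‖ ≤ B := hks.trans (le_trans (le_max_left _ _) (le_max_right _ _))
  have hxp : ‖x * y‖ ≤ B :=
    hkp.trans (le_trans (le_trans (le_max_left _ _) (le_max_right _ _)) (le_max_right _ _))
  have hxz : ‖z‖ ≤ B :=
    hk3.trans (le_trans (le_trans (le_max_right _ _) (le_max_right _ _)) (le_max_right _ _))
  have hnorm : ‖ξ k‖ = max ‖x‖ (max ‖y‖ ‖z‖) := by
    rw [Prod.norm_def, Prod.norm_def]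
  -- key bound: max ‖x‖ ‖y‖ ≤ 2B
  have key : ∀ u v : ℂ, ‖u + v‖ ≤ B → ‖u * v‖ ≤ B → ‖v‖ ≤ ‖u‖ → ‖u‖ ≤ 2 * B := by
    intro u v h1 h2 h3
    by_contra hgt
    push_neg at hgt
    have hu1 : (1 : ℝ) ≤ ‖u‖ := by linarith
    have : ‖u‖ * ‖u‖ ≤ B * ‖u‖ + B := by
      calc ‖u‖ * ‖u‖ = ‖u * u‖ := (norm_mul u u).symm
        _ = ‖(u + v) * u - u * v‖ := by ring_nf
        _ ≤ ‖(u + v) * u‖ + ‖u * v‖ := norm_sub_le _ _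
        _ = ‖u + v‖ * ‖u‖ + ‖u * v‖ := by rw [norm_mul]
        _ ≤ B * ‖u‖ + B := by gcongr
    have hBB : B ≤ B * ‖u‖ := le_mul_of_one_le_right (by linarith) hu1
    nlinarith
  have hxbound : ‖x‖ ≤ 2 * B ∧ ‖y‖ ≤ 2 * B := by
    rcases le_total ‖y‖ ‖x‖ with hle | hle
    · have := key x y hxs hxp hle
      exact ⟨this, hle.trans this⟩
    · have := key y x (by rwa [add_comm]) (by rwa [mul_comm]) hle
      exact ⟨hle.trans this, this⟩
  have : ‖ξ k‖ ≤ 2 * B := by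
    rw [hnorm]
    exact max_le hxbound.1 (max_le hxbound.2 (by linarith))
  linarith
end

section
/- For the polynomial map F : ℂ³ → ℂ³ defined by F(x₁,x₂,x₃) = ((x₁x₂)², (x₂x₃)², x₁x₂²x₃ + x₂), every point of the punctured axis {(t,0,0) : t ∈ ℂ, t ≠ 0} belongs to S_F, witnessed by curves of the form γ(u) = (α·u², 1/u², u) with α² = t. -/
open Filter Topology

lemma aux_norm (α : ℂ) :
    Tendsto (fun u : ℝ =>
      ‖((α * (u : ℂ) ^ 2, ((u : ℂ) ^ 2)⁻¹, (u : ℂ)) : ℂ × ℂ × ℂ)‖) atTop atTop := by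
  apply tendsto_atTop_mono (f := fun u : ℝ => |u|)
  · intro u
    calc |u| = ‖(u : ℂ)‖ := (Complex.norm_real u).symm
    _ ≤ ‖((((u : ℂ) ^ 2)⁻¹, (u : ℂ)) : ℂ × ℂ)‖ :=
        norm_snd_le ((((u : ℂ) ^ 2)⁻¹, (u : ℂ)) : ℂ × ℂ)
    _ ≤ _ := norm_snd_le ((α * (u : ℂ) ^ 2, ((u : ℂ) ^ 2)⁻¹, (u : ℂ)) : ℂ × ℂ × ℂ)
  · exact tendsto_abs_atTop_atTop

lemma aux_inv : Tendsto (fun u : ℝ => ((u : ℂ))⁻¹) atTop (𝓝 0) := by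
  have := (Complex.continuous_ofReal.tendsto 0).comp tendsto_inv_atTop_zero
  simpa [Function.comp_def] using this

lemma aux_tendsto (t α : ℂ) (hα : α ^ 2 = t)
    (F : ℂ × ℂ × ℂ → ℂ × ℂ × ℂ)
    (hF : F = fun x : ℂ × ℂ × ℂ =>
      ((x.1 * x.2.1) ^ 2, (x.2.1 * x.2.2) ^ 2, x.1 * x.2.1 ^ 2 * x.2.2 + x.2.1)) :
    Tendsto (fun u : ℝ => F (α * (u : ℂ) ^ 2, ((u : ℂ) ^ 2)⁻¹, (u : ℂ))) atTop
      (𝓝 (t, (0 : ℂ), (0 : ℂ))) := by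
  have h1 : Tendsto (fun u : ℝ =>
      ((α ^ 2, ((u : ℂ)⁻¹) ^ 2, α * (u : ℂ)⁻¹ + ((u : ℂ)⁻¹) ^ 2) : ℂ × ℂ × ℂ))
      atTop (𝓝 (t, (0 : ℂ), (0 : ℂ))) := by
    refine Tendsto.prodMk_nhds ?_ (Tendsto.prodMk_nhds ?_ ?_)
    · simpa [hα] using tendsto_const_nhds (x := t) (f := atTop (α := ℝ))
    · simpa using (aux_inv.pow 2)
    · simpa using ((aux_inv.const_mul α).add (aux_inv.pow 2))
  refine h1.congr' ?_
  filter_upwards [eventually_ge_atTop (1 : ℝ)] with u hu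
  have hu0 : (u : ℂ) ≠ 0 := by
    have : u ≠ 0 := by linarith
    exact_mod_cast this
  subst hF
  simp only
  refine Prod.ext ?_ (Prod.ext ?_ ?_) <;> simp <;> field_simp <;> ring

theorem stmt_18 (F : ℂ × ℂ × ℂ → ℂ × ℂ × ℂ)
    (hF : F = fun x : ℂ × ℂ × ℂ =>
      ((x.1 * x.2.1) ^ 2, (x.2.1 * x.2.2) ^ 2, x.1 * x.2.1 ^ 2 * x.2.2 + x.2.1))
    (t : ℂ) (ht : t ≠ 0) :
    ((t, (0 : ℂ), (0 : ℂ)) ∈ asymptoticSet F) ∧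
    ∀ α : ℂ, α ^ 2 = t →
      Tendsto (fun u : ℝ =>
          ‖((α * (u : ℂ) ^ 2, ((u : ℂ) ^ 2)⁻¹, (u : ℂ)) : ℂ × ℂ × ℂ)‖) atTop atTop ∧
      Tendsto (fun u : ℝ => F (α * (u : ℂ) ^ 2, ((u : ℂ) ^ 2)⁻¹, (u : ℂ))) atTop
        (𝓝 (t, (0 : ℂ), (0 : ℂ))) := by
  constructor
  · obtain ⟨α, hα⟩ := IsAlgClosed.exists_pow_nat_eq t (n := 2) (by norm_num)
    rw [pow_two] at hα
    have hα2 : α ^ 2 = t := by rw [← hα]; ring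
    have hnat : Tendsto (fun k : ℕ => (k : ℝ)) atTop atTop :=
      tendsto_natCast_atTop_atTop
    exact ⟨fun k => (α * ((k : ℝ) : ℂ) ^ 2, (((k : ℝ) : ℂ) ^ 2)⁻¹, ((k : ℝ) : ℂ)),
      (aux_norm α).comp hnat, (aux_tendsto t α hα2 F hF).comp hnat⟩
  · exact fun α hα => ⟨aux_norm α, aux_tendsto t α hα F hF⟩
end
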